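/- Strict monotonicity of ρ-Shapley rewards: let v and v' be coalition value functions with v'(A) = v(A) for all A ⊆ N\{i}, v'(C ∪ {i}) ≥ v(C ∪ {i}) for all C ⊆ N\{i}, strict for some B ⊆ N\{i}, and v'(N) > r_i. Assume all Shapley values are positive. Then with r_i = (φ_i/φ_p)^ρ · v(N) and r'_i = (φ'_i/φ'_ℓ)^ρ · v'(N), where φ_p = max_j φ_j and φ'_ℓ = max_j φ'_j and ρ ∈ (0,1], it holds that r'_i > r_i. -/

import Mathlib

def preceding {n : ℕ} (σ : Equiv.Perm (Fin n)) (i : Fin n) : Finset (Fin n) :=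
  Finset.univ.filter (fun j => σ j < σ i)

/-- The Shapley value of party `i`: the average over all permutations of the
marginal contribution of `i` to the coalition of parties preceding it. -/
noncomputable def shapley {n : ℕ} (v : Finset (Fin n) → ℝ) (i : Fin n) : ℝ :=
  (∑ σ : Equiv.Perm (Fin n), (v (insert i (preceding σ i)) - v (preceding σ i))) /
    (Nat.factorial n)

lemma not_mem_preceding_self {n : ℕ} (σ : Equiv.Perm (Fin n)) (i : Fin n) :
    i ∉ preceding σ i := by
  simp [preceding]

lemma insert_preceding_swap {n : ℕ} (i j : Fin n) (hij : i ≠ j) (σ : Equiv.Perm (Fin n))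
    (h : σ i < σ j) :
    insert i (preceding (σ * Equiv.swap i j) i) = insert j (preceding σ j) := by
  ext k
  simp only [preceding, Finset.mem_insert, Finset.mem_filter, Finset.mem_univ, true_and,
    Equiv.Perm.mul_apply, Equiv.swap_apply_left]
  rcases eq_or_ne k i with rfl | hki
  · simp [Equiv.swap_apply_left, h]
  rcases eq_or_ne k j with rfl | hkj
  · simp [Equiv.swap_apply_right, h]
  · simp [Equiv.swap_apply_of_ne_of_ne hki hkj, hki, hkj]

lemma sum_insert_le {n : ℕ} (g : Finset (Fin n) → ℝ) (i j : Fin n)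
    (hg0 : ∀ A, i ∉ A → g A = 0) (hgnn : ∀ A, 0 ≤ g A) :
    ∑ σ : Equiv.Perm (Fin n), g (insert j (preceding σ j))
      ≤ ∑ σ : Equiv.Perm (Fin n), g (insert i (preceding σ i)) := by
  rcases eq_or_ne j i with rfl | hij
  · exact le_refl _
  classical
  have h1 : ∑ σ : Equiv.Perm (Fin n), g (insert j (preceding σ j))
      = ∑ σ ∈ Finset.univ.filter (fun σ : Equiv.Perm (Fin n) => σ i < σ j),
          g (insert j (preceding σ j)) := by
    refine (Finset.sum_subset (Finset.filter_subset _ _) ?_).symm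
    intro σ _ hσ
    simp only [Finset.mem_filter, Finset.mem_univ, true_and, not_lt] at hσ
    apply hg0
    simp only [Finset.mem_insert, preceding, Finset.mem_filter, Finset.mem_univ, true_and]
    push_neg
    exact ⟨Ne.symm hij, hσ⟩
  have h2 : ∑ σ ∈ Finset.univ.filter (fun σ : Equiv.Perm (Fin n) => σ i < σ j),
      g (insert j (preceding σ j))
      = ∑ σ ∈ Finset.univ.filter (fun σ : Equiv.Perm (Fin n) => σ j < σ i),
          g (insert i (preceding σ i)) := by
    refine Finset.sum_nbij' (fun σ => σ * Equiv.swap i j) (fun σ => σ * Equiv.swap i j)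
      ?_ ?_ ?_ ?_ ?_
    · intro σ hσ
      simp only [Finset.mem_filter, Finset.mem_univ, true_and] at hσ ⊢
      simp [Equiv.Perm.mul_apply, hσ]
    · intro σ hσ
      simp only [Finset.mem_filter, Finset.mem_univ, true_and] at hσ ⊢
      simp [Equiv.Perm.mul_apply, hσ]
    · intro σ _
      simp [mul_assoc]
    · intro σ _
      simp [mul_assoc]
    · intro σ hσ
      simp only [Finset.mem_filter, Finset.mem_univ, true_and] at hσ
      rw [insert_preceding_swap i j (Ne.symm hij) σ hσ]
  rw [h1, h2]
  refine Finset.sum_le_sum_of_subset_of_nonneg (Finset.filter_subset _ _) ?_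
  intro σ _ _
  exact hgnn _

lemma shapley_sub {n : ℕ} (v v' : Finset (Fin n) → ℝ) (j : Fin n) :
    shapley v' j - shapley v j
      = (∑ σ : Equiv.Perm (Fin n),
          ((v' (insert j (preceding σ j)) - v (insert j (preceding σ j)))
            - (v' (preceding σ j) - v (preceding σ j)))) / (Nat.factorial n) := by
  unfold shapley
  rw [div_sub_div_same, ← Finset.sum_sub_distrib]
  congr 1
  apply Finset.sum_congr rfl
  intros
  ring

lemma exists_preceding_eq {n : ℕ} (i : Fin n) (B : Finset (Fin n)) (hB : i ∉ B) :
    ∃ σ : Equiv.Perm (Fin n), preceding σ i = B := by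
  classical
  set w : Fin n → ℕ := fun k => if k ∈ B then 0 else if k = i then 1 else 2 with hw
  refine ⟨(Tuple.sort w)⁻¹, ?_⟩
  have hmono := Tuple.monotone_sort w
  have hwi : w i = 1 := by simp [hw, hB]
  ext k
  simp only [preceding, Finset.mem_filter, Finset.mem_univ, true_and]
  constructor
  · intro hk
    by_contra hkB
    have hki : k ≠ i := by rintro rfl; exact lt_irrefl _ hk
    have hwk : w k = 2 := by simp [hw, hkB, hki]
    have hle := hmono (le_of_lt hk)
    simp only [Function.comp_apply, Equiv.Perm.coe_inv, Equiv.apply_symm_apply] at hle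
    rw [hwk, hwi] at hle
    omega
  · intro hkB
    have hki : k ≠ i := fun h => hB (h ▸ hkB)
    have hwk : w k = 0 := by simp [hw, hkB]
    rcases lt_trichotomy ((Tuple.sort w)⁻¹ k) ((Tuple.sort w)⁻¹ i) with h | h | h
    · exact h
    · exact absurd (((Tuple.sort w)⁻¹).injective h) hki
    · exfalso
      have hle := hmono (le_of_lt h)
      simp only [Function.comp_apply, Equiv.Perm.coe_inv, Equiv.apply_symm_apply] at hle
      rw [hwk, hwi] at hle
      omega

/-- Strict monotonicity of the ρ-Shapley reward scheme: if the value of every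
coalition containing `i` weakly increases (strictly for some coalition), the values
of all other coalitions are unchanged, and `v' N` exceeds party `i`'s old reward,
then party `i`'s reward strictly increases. -/
theorem rho_shapley_reward_strict_monotonicity {n : ℕ}
    (v v' : Finset (Fin n) → ℝ) (i : Fin n) (ρ φp φl : ℝ)
    (hρ0 : 0 < ρ) (hρ1 : ρ ≤ 1)
    (hsame : ∀ A : Finset (Fin n), i ∉ A → v' A = v A)
    (hge : ∀ C : Finset (Fin n), i ∉ C → v (insert i C) ≤ v' (insert i C))
    (hstrict : ∃ B : Finset (Fin n), i ∉ B ∧ v (insert i B) < v' (insert i B))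
    (hφpos : ∀ j, 0 < shapley v j) (hφ'pos : ∀ j, 0 < shapley v' j)
    (hvN : 0 < v Finset.univ) (hv'N : 0 < v' Finset.univ)
    (hφp : ∀ j, shapley v j ≤ φp) (hφpmem : ∃ j, shapley v j = φp)
    (hφl : ∀ j, shapley v' j ≤ φl) (hφlmem : ∃ j, shapley v' j = φl)
    (hri : (shapley v i / φp) ^ ρ * v Finset.univ < v' Finset.univ) :
    (shapley v i / φp) ^ ρ * v Finset.univ
      < (shapley v' i / φl) ^ ρ * v' Finset.univ := by
  classical
  obtain ⟨p, hp⟩ := hφpmem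
  obtain ⟨l, hl⟩ := hφlmem
  have hφppos : 0 < φp := hp ▸ hφpos p
  have hφlpos : 0 < φl := hl ▸ hφ'pos l
  have hg0 : ∀ A : Finset (Fin n), i ∉ A → v' A - v A = 0 := by
    intro A hA
    rw [hsame A hA]
    ring
  have hgnn : ∀ A : Finset (Fin n), 0 ≤ v' A - v A := by
    intro A
    by_cases hA : i ∈ A
    · have h := hge (A.erase i) (Finset.notMem_erase i A)
      rw [Finset.insert_erase hA] at h
      linarith
    · rw [hg0 A hA]
  have hfacpos : (0 : ℝ) < (Nat.factorial n : ℝ) := by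
    exact_mod_cast Nat.factorial_pos n
  -- d_i as a sum of nonnegative terms
  have hdi : shapley v' i - shapley v i
      = (∑ σ : Equiv.Perm (Fin n), (v' (insert i (preceding σ i)) - v (insert i (preceding σ i))))
          / (Nat.factorial n) := by
    rw [shapley_sub]
    congr 1
    apply Finset.sum_congr rfl
    intro σ _
    have h0 := hg0 _ (not_mem_preceding_self σ i)
    linarith
  -- d_i > 0
  obtain ⟨B, hBi, hBlt⟩ := hstrict
  obtain ⟨σ0, hσ0⟩ := exists_preceding_eq i B hBi
  have hsumpos : 0 < ∑ σ : Equiv.Perm (Fin n),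
      (v' (insert i (preceding σ i)) - v (insert i (preceding σ i))) := by
    refine Finset.sum_pos' (fun σ _ => hgnn _) ⟨σ0, Finset.mem_univ _, ?_⟩
    rw [hσ0]
    linarith
  have hdipos : 0 < shapley v' i - shapley v i := by
    rw [hdi]
    positivity
  -- party monotonicity: d_j ≤ d_i for all j
  have hd_le : ∀ j, shapley v' j - shapley v j ≤ shapley v' i - shapley v i := by
    intro j
    rw [shapley_sub v v' j, hdi]
    have key := sum_insert_le (fun A => v' A - v A) i j hg0 hgnn
    rw [div_le_div_iff_of_pos_right hfacpos]
    refine le_trans (Finset.sum_le_sum ?_) key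
    intro σ _
    have := hgnn (preceding σ j)
    linarith
  -- v univ ≤ v' univ
  have hvv' : v Finset.univ ≤ v' Finset.univ := by
    have h := hge (Finset.univ.erase i) (Finset.notMem_erase i _)
    rwa [Finset.insert_erase (Finset.mem_univ i)] at h
  have hφli : shapley v' i ≤ φl := hφl i
  have hφpi : shapley v i ≤ φp := hφp i
  have hφl_le : φl ≤ φp + (shapley v' i - shapley v i) := by
    have h1 := hd_le l
    have h2 := hφp l
    linarith [hl]
  rcases eq_or_lt_of_le hφpi with hcase | hcase
  · -- φ_i = φp : then φ'_i = φl, ratio' = 1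
    have heq : shapley v' i = φl := by
      have : φl ≤ shapley v' i := by linarith
      linarith
    rw [heq, div_self (ne_of_gt hφlpos), Real.one_rpow, one_mul]
    exact hri
  · -- φ_i < φp : strict ratio increase
    have hφipos := hφpos i
    have hφ'ipos := hφ'pos i
    have hkey : shapley v i * φl < shapley v' i * φp := by
      nlinarith [hφl_le, hdipos, hcase, hφipos]
    have hratio : shapley v i / φp < shapley v' i / φl := by
      rw [div_lt_div_iff₀ hφppos hφlpos]
      linarith
    have hrationn : 0 ≤ shapley v i / φp := le_of_lt (div_pos hφipos hφppos)
    have ht : (shapley v i / φp) ^ ρ < (shapley v' i / φl) ^ ρ :=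
      Real.rpow_lt_rpow hrationn hratio hρ0
    have ht'pos : 0 < (shapley v' i / φl) ^ ρ :=
      Real.rpow_pos_of_pos (div_pos hφ'ipos hφlpos) ρ
    calc (shapley v i / φp) ^ ρ * v Finset.univ
        < (shapley v' i / φl) ^ ρ * v Finset.univ := by
          exact mul_lt_mul_of_pos_right ht hvN
      _ ≤ (shapley v' i / φl) ^ ρ * v' Finset.univ := by
          exact mul_le_mul_of_nonneg_left hvv' (le_of_lt ht'pos)
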